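/- arXiv:0803.1508 — 2 statements merged into one kernel-verified Lean document; each statement's English description precedes it below -/
import Mathlib

section
/- For real numbers ρ and ρ₀ with ρ₀ > 0 and ρ ≠ 1, one has (ρ₀/π) ∫_{-∞}^{∞} ln(|1 - ρ + i t|) / (ρ₀² + t²) dt = ln(|1 - ρ| + ρ₀). -/
open MeasureTheory Real Set Filter

lemma integrable_kernel {c : ℝ} (hc : 0 < c) :
    Integrable fun t : ℝ => (c ^ 2 + t ^ 2)⁻¹ := by
  have h : ∀ t : ℝ, (c ^ 2 + t ^ 2)⁻¹ = (c ^ 2)⁻¹ * (1 + (t / c) ^ 2)⁻¹ := by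
    intro t
    rw [← mul_inv]
    congr 1
    field_simp
  simp_rw [h]
  exact (integrable_inv_one_add_sq.comp_div hc.ne').const_mul _

lemma integral_kernel {c : ℝ} (hc : 0 < c) :
    ∫ t : ℝ, (c ^ 2 + t ^ 2)⁻¹ = π / c := by
  have h : ∀ t : ℝ, (c ^ 2 + t ^ 2)⁻¹ = (c ^ 2)⁻¹ * (1 + (t / c) ^ 2)⁻¹ := by
    intro t
    rw [← mul_inv]
    congr 1
    field_simp
  simp_rw [h]
  rw [MeasureTheory.integral_const_mul, MeasureTheory.Measure.integral_comp_div
    (fun x : ℝ => (1 + x ^ 2)⁻¹) c, integral_univ_inv_one_add_sq, abs_of_pos hc,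
    smul_eq_mul]
  field_simp

lemma cont_sqrt_kernel {b : ℝ} (hb : 0 < b) :
    Continuous fun t : ℝ => Real.sqrt |t| * (b ^ 2 + t ^ 2)⁻¹ :=
  (Real.continuous_sqrt.comp continuous_abs).mul <|
    (continuous_const.add (continuous_pow 2)).inv₀ (fun t => (by positivity : (0:ℝ) < b ^ 2 + t ^ 2).ne')

lemma integrableOn_sqrt_kernel_Ioi {b : ℝ} (hb : 0 < b) :
    IntegrableOn (fun t : ℝ => Real.sqrt |t| * (b ^ 2 + t ^ 2)⁻¹) (Ioi 1) := by
  refine Integrable.mono' (integrableOn_Ioi_rpow_of_lt (by norm_num : (-3/2 : ℝ) < -1) one_pos)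
    ((cont_sqrt_kernel hb).aestronglyMeasurable.restrict) ?_
  filter_upwards [ae_restrict_mem measurableSet_Ioi] with t ht
  have ht1 : (1 : ℝ) < t := ht
  have ht0 : (0 : ℝ) < t := by linarith
  have h1 : Real.sqrt |t| = t ^ (1/2 : ℝ) := by
    rw [abs_of_pos ht0, Real.sqrt_eq_rpow]
  have h2 : (b ^ 2 + t ^ 2)⁻¹ ≤ t ^ (-2 : ℝ) := by
    rw [Real.rpow_neg ht0.le, Real.rpow_two]
    exact inv_anti₀ (by positivity) (by nlinarith)
  have hs : 0 ≤ Real.sqrt |t| * (b ^ 2 + t ^ 2)⁻¹ := by positivity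
  rw [Real.norm_eq_abs, abs_of_nonneg hs]
  calc Real.sqrt |t| * (b ^ 2 + t ^ 2)⁻¹ ≤ t ^ (1/2 : ℝ) * t ^ (-2 : ℝ) := by
        rw [h1]; exact mul_le_mul_of_nonneg_left h2 (by positivity)
    _ = t ^ (-3/2 : ℝ) := by rw [← Real.rpow_add ht0]; norm_num

lemma integrable_sqrt_kernel {b : ℝ} (hb : 0 < b) :
    Integrable fun t : ℝ => Real.sqrt |t| * (b ^ 2 + t ^ 2)⁻¹ := by
  have hIio : IntegrableOn (fun t : ℝ => Real.sqrt |t| * (b ^ 2 + t ^ 2)⁻¹) (Iio (-1)) := by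
    rw [← (Measure.measurePreserving_neg (volume : Measure ℝ)).integrableOn_comp_preimage
        (Homeomorph.neg ℝ).measurableEmbedding]
    simp only [Function.comp_def, neg_preimage, neg_Iio, neg_neg, abs_neg, neg_sq]
    exact integrableOn_sqrt_kernel_Ioi hb
  have hIcc : IntegrableOn (fun t : ℝ => Real.sqrt |t| * (b ^ 2 + t ^ 2)⁻¹) (Icc (-1) 1) :=
    (cont_sqrt_kernel hb).integrableOn_Icc
  rw [← integrableOn_univ]
  have : (univ : Set ℝ) ⊆ Iio (-1) ∪ (Icc (-1) 1 ∪ Ioi 1) := by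
    intro x _
    rcases lt_trichotomy x (-1) with h | h | h
    · exact Or.inl h
    · exact Or.inr (Or.inl ⟨le_of_eq h.symm, by linarith⟩)
    · rcases le_or_gt x 1 with h2 | h2
      · exact Or.inr (Or.inl ⟨h.le, h2⟩)
      · exact Or.inr (Or.inr h2)
  exact (hIio.union (hIcc.union (integrableOn_sqrt_kernel_Ioi hb))).mono_set this

lemma sqrt_subadd {x y : ℝ} (hx : 0 ≤ x) (hy : 0 ≤ y) :
    Real.sqrt (x + y) ≤ Real.sqrt x + Real.sqrt y := by
  have h : x + y ≤ (Real.sqrt x + Real.sqrt y) ^ 2 := by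
    have hx2 := Real.sq_sqrt hx
    have hy2 := Real.sq_sqrt hy
    have := Real.sqrt_nonneg x
    have := Real.sqrt_nonneg y
    nlinarith [mul_nonneg (Real.sqrt_nonneg x) (Real.sqrt_nonneg y)]
  calc Real.sqrt (x + y) ≤ Real.sqrt ((Real.sqrt x + Real.sqrt y) ^ 2) := Real.sqrt_le_sqrt h
    _ = Real.sqrt x + Real.sqrt y := Real.sqrt_sq (by positivity)

lemma log_bound {a : ℝ} (ha : 0 < a) (t : ℝ) :
    |Real.log (a ^ 2 + t ^ 2)| ≤ (|Real.log (a ^ 2)| + 4 * Real.sqrt a) + 4 * Real.sqrt |t| := by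
  have hpos : 0 < a ^ 2 + t ^ 2 := by positivity
  have hup : Real.log (a ^ 2 + t ^ 2) ≤ 4 * Real.sqrt a + 4 * Real.sqrt |t| := by
    have h1 : Real.log (a ^ 2 + t ^ 2) ≤ (a ^ 2 + t ^ 2) ^ (4⁻¹ : ℝ) / 4⁻¹ := by
      simpa using Real.log_le_rpow_div hpos.le (by norm_num : (0:ℝ) < 4⁻¹)
    have h2 : (a ^ 2 + t ^ 2) ^ (4⁻¹ : ℝ) = Real.sqrt (Real.sqrt (a ^ 2 + t ^ 2)) := by
      rw [Real.sqrt_eq_rpow, Real.sqrt_eq_rpow, ← Real.rpow_mul hpos.le]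
      norm_num
    have h3 : Real.sqrt (a ^ 2 + t ^ 2) ≤ a + |t| := by
      rw [show a + |t| = Real.sqrt ((a + |t|) ^ 2) from (Real.sqrt_sq (by positivity)).symm]
      apply Real.sqrt_le_sqrt
      have : 0 ≤ a * |t| := by positivity
      nlinarith [sq_abs t]
    have h4 : Real.sqrt (Real.sqrt (a ^ 2 + t ^ 2)) ≤ Real.sqrt a + Real.sqrt |t| :=
      le_trans (Real.sqrt_le_sqrt h3) (sqrt_subadd ha.le (abs_nonneg t))
    calc Real.log (a ^ 2 + t ^ 2) ≤ (a ^ 2 + t ^ 2) ^ (4⁻¹ : ℝ) / 4⁻¹ := h1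
      _ = 4 * Real.sqrt (Real.sqrt (a ^ 2 + t ^ 2)) := by rw [h2]; ring
      _ ≤ 4 * Real.sqrt a + 4 * Real.sqrt |t| := by linarith
  have hlo : Real.log (a ^ 2) ≤ Real.log (a ^ 2 + t ^ 2) :=
    Real.log_le_log (by positivity) (by nlinarith)
  rw [abs_le]
  have hs1 : 0 ≤ Real.sqrt a := Real.sqrt_nonneg _
  have hs2 : 0 ≤ Real.sqrt |t| := Real.sqrt_nonneg _
  have hn := neg_abs_le (Real.log (a ^ 2))
  have hp := abs_nonneg (Real.log (a ^ 2))
  exact ⟨by linarith, by linarith⟩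

lemma integrable_log_kernel {a b : ℝ} (ha : 0 < a) (hb : 0 < b) :
    Integrable fun t : ℝ => Real.log (a ^ 2 + t ^ 2) * (b ^ 2 + t ^ 2)⁻¹ := by
  set C := |Real.log (a ^ 2)| + 4 * Real.sqrt a with hC
  refine Integrable.mono' (g := fun t => C * (b ^ 2 + t ^ 2)⁻¹ + 4 * (Real.sqrt |t| * (b ^ 2 + t ^ 2)⁻¹))
    (((integrable_kernel hb).const_mul C).add ((integrable_sqrt_kernel hb).const_mul 4))
    ?_ ?_
  · exact (((continuous_const.add (continuous_pow 2)).log (fun t => (by positivity : (0:ℝ) < a ^ 2 + t ^ 2).ne')).mul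
      ((continuous_const.add (continuous_pow 2)).inv₀ fun t => (by positivity : (0:ℝ) < b ^ 2 + t ^ 2).ne')).aestronglyMeasurable
  · filter_upwards with t
    have hk0 : (0:ℝ) < (b ^ 2 + t ^ 2) := by positivity
    rw [norm_mul, Real.norm_eq_abs, Real.norm_eq_abs, abs_of_pos (inv_pos.2 hk0)]
    have h := log_bound ha t
    have hs : 0 ≤ Real.sqrt |t| := Real.sqrt_nonneg _
    calc |Real.log (a ^ 2 + t ^ 2)| * (b ^ 2 + t ^ 2)⁻¹
        ≤ (C + 4 * Real.sqrt |t|) * (b ^ 2 + t ^ 2)⁻¹ := by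
          exact mul_le_mul_of_nonneg_right h (by positivity)
      _ = C * (b ^ 2 + t ^ 2)⁻¹ + 4 * (Real.sqrt |t| * (b ^ 2 + t ^ 2)⁻¹) := by ring

lemma hasDerivAt_F {b : ℝ} (hb : 0 < b) {a : ℝ} (ha : 0 < a) :
    HasDerivAt (fun x : ℝ => ∫ t : ℝ, Real.log (x ^ 2 + t ^ 2) * (b ^ 2 + t ^ 2)⁻¹)
      (∫ t : ℝ, 2 * a / (a ^ 2 + t ^ 2) * (b ^ 2 + t ^ 2)⁻¹) a := by
  have hmain := hasDerivAt_integral_of_dominated_loc_of_deriv_le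
    (F := fun x t => Real.log (x ^ 2 + t ^ 2) * (b ^ 2 + t ^ 2)⁻¹)
    (F' := fun x t => 2 * x / (x ^ 2 + t ^ 2) * (b ^ 2 + t ^ 2)⁻¹)
    (x₀ := a) (bound := fun t => (12 / a) * (b ^ 2 + t ^ 2)⁻¹)
    (Metric.ball_mem_nhds a (half_pos ha)) ?_ (integrable_log_kernel ha hb) ?_ ?_
    (((integrable_kernel hb).const_mul _)) ?_
  · exact hmain.2
  · filter_upwards [eventually_gt_nhds (half_lt_self ha)] with x hx
    have hx0 : 0 < x := lt_trans (half_pos ha) hx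
    exact (((continuous_const.add (continuous_pow 2)).log (fun t => (by positivity : (0:ℝ) < x ^ 2 + t ^ 2).ne')).mul
      ((continuous_const.add (continuous_pow 2)).inv₀ fun t => (by positivity : (0:ℝ) < b ^ 2 + t ^ 2).ne')).aestronglyMeasurable
  · apply Continuous.aestronglyMeasurable
    apply Continuous.mul
    · exact continuous_const.div (continuous_const.add (continuous_pow 2)) fun t => (by positivity : (0:ℝ) < a ^ 2 + t ^ 2).ne'
    · exact (continuous_const.add (continuous_pow 2)).inv₀ fun t => (by positivity : (0:ℝ) < b ^ 2 + t ^ 2).ne'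
  · filter_upwards with t x hx
    rw [Metric.mem_ball, Real.dist_eq, abs_lt] at hx
    have hx1 : a / 2 < x := by linarith
    have hx2 : x < 3 * a / 2 := by linarith
    have hx0 : 0 < x := lt_trans (half_pos ha) hx1
    have hxt : (a / 2) ^ 2 ≤ x ^ 2 + t ^ 2 := by nlinarith
    have hk0 : (0:ℝ) < b ^ 2 + t ^ 2 := by positivity
    rw [norm_mul, Real.norm_eq_abs, Real.norm_eq_abs, abs_of_pos (inv_pos.2 hk0),
      abs_of_pos (by positivity : (0:ℝ) < 2 * x / (x ^ 2 + t ^ 2))]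
    have h1 : 2 * x / (x ^ 2 + t ^ 2) ≤ 12 / a := by
      rw [div_le_div_iff₀ (by positivity) ha]
      nlinarith
    exact mul_le_mul_of_nonneg_right h1 (by positivity)
  · filter_upwards with t x hx
    rw [Metric.mem_ball, Real.dist_eq, abs_lt] at hx
    have hx0 : 0 < x := by linarith
    have hpos : 0 < x ^ 2 + t ^ 2 := by positivity
    have h1 : HasDerivAt (fun x : ℝ => x ^ 2 + t ^ 2) (2 * x) x := by
      simpa using ((hasDerivAt_pow 2 x).add_const (t ^ 2))
    exact (h1.log hpos.ne').mul_const _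

lemma integral_F' {a b : ℝ} (ha : 0 < a) (hb : 0 < b) (hab : a ≠ b) :
    ∫ t : ℝ, 2 * a / (a ^ 2 + t ^ 2) * (b ^ 2 + t ^ 2)⁻¹
      = 2 * π / (b * (a + b)) := by
  have key : ∀ t : ℝ, 2 * a / (a ^ 2 + t ^ 2) * (b ^ 2 + t ^ 2)⁻¹
      = (2 * a / (a ^ 2 - b ^ 2)) * ((b ^ 2 + t ^ 2)⁻¹ - (a ^ 2 + t ^ 2)⁻¹) := by
    intro t
    have h1 : (0:ℝ) < a ^ 2 + t ^ 2 := by positivity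
    have h2 : (0:ℝ) < b ^ 2 + t ^ 2 := by positivity
    have h3 : a ^ 2 - b ^ 2 ≠ 0 := by
      intro h
      apply hab
      nlinarith
    field_simp
    ring
  simp_rw [key]
  rw [integral_const_mul, integral_sub (integrable_kernel hb) (integrable_kernel ha),
    integral_kernel hb, integral_kernel ha]
  have h3 : a ^ 2 - b ^ 2 ≠ 0 := by intro h; apply hab; nlinarith
  have : a ^ 2 - b ^ 2 = (a - b) * (a + b) := by ring
  field_simp
  ring

lemma integrable_log_one_add {a b : ℝ} (ha : 0 < a) (hb : 0 < b) :
    Integrable fun t : ℝ => Real.log (1 + t ^ 2 / a ^ 2) * (b ^ 2 + t ^ 2)⁻¹ := by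
  have h : ∀ t : ℝ, Real.log (1 + t ^ 2 / a ^ 2) * (b ^ 2 + t ^ 2)⁻¹
      = Real.log (a ^ 2 + t ^ 2) * (b ^ 2 + t ^ 2)⁻¹
        - Real.log (a ^ 2) * (b ^ 2 + t ^ 2)⁻¹ := by
    intro t
    rw [← sub_mul]
    congr 1
    rw [← Real.log_div (by positivity) (by positivity)]
    congr 1
    field_simp
  simp_rw [h]
  exact (integrable_log_kernel ha hb).sub ((integrable_kernel hb).const_mul _)

lemma F_decomp {a b : ℝ} (ha : 0 < a) (hb : 0 < b) :
    ∫ t : ℝ, Real.log (a ^ 2 + t ^ 2) * (b ^ 2 + t ^ 2)⁻¹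
      = Real.log (a ^ 2) * (π / b) + ∫ t : ℝ, Real.log (1 + t ^ 2 / a ^ 2) * (b ^ 2 + t ^ 2)⁻¹ := by
  have h : ∀ t : ℝ, Real.log (a ^ 2 + t ^ 2) * (b ^ 2 + t ^ 2)⁻¹
      = Real.log (a ^ 2) * (b ^ 2 + t ^ 2)⁻¹
        + Real.log (1 + t ^ 2 / a ^ 2) * (b ^ 2 + t ^ 2)⁻¹ := by
    intro t
    rw [← add_mul]
    congr 1
    rw [← Real.log_mul (by positivity) (by positivity)]
    congr 1
    field_simp
  simp_rw [h]
  rw [integral_add ((integrable_kernel hb).const_mul _) (integrable_log_one_add ha hb),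
    integral_const_mul, integral_kernel hb]

lemma tendsto_J {b : ℝ} (hb : 0 < b) :
    Tendsto (fun a : ℝ => ∫ t : ℝ, Real.log (1 + t ^ 2 / a ^ 2) * (b ^ 2 + t ^ 2)⁻¹)
      atTop (nhds 0) := by
  have h0 : (0 : ℝ) = ∫ t : ℝ, (0 : ℝ) := by simp
  rw [h0]
  apply tendsto_integral_filter_of_dominated_convergence
    (bound := fun t => Real.log (1 + t ^ 2) * (b ^ 2 + t ^ 2)⁻¹)
  · filter_upwards [eventually_ge_atTop (1 : ℝ)] with a ha
    have ha0 : (0:ℝ) < a := by linarith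
    exact (((continuous_const.add ((continuous_pow 2).div_const _)).log
        (fun t => (by positivity : (0:ℝ) < 1 + t ^ 2 / a ^ 2).ne')).mul
      ((continuous_const.add (continuous_pow 2)).inv₀ fun t => (by positivity : (0:ℝ) < b ^ 2 + t ^ 2).ne')).aestronglyMeasurable
  · filter_upwards [eventually_ge_atTop (1 : ℝ)] with a ha
    filter_upwards with t
    have ha0 : (0:ℝ) < a := by linarith
    have h1 : (1:ℝ) ≤ 1 + t ^ 2 / a ^ 2 := by nlinarith [sq_nonneg t, sq_nonneg a, div_nonneg (sq_nonneg t) (sq_nonneg a)]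
    have hk : (0:ℝ) < (b ^ 2 + t ^ 2) := by positivity
    rw [norm_mul, Real.norm_eq_abs, Real.norm_eq_abs, abs_of_pos (inv_pos.2 hk),
      abs_of_nonneg (Real.log_nonneg h1)]
    apply mul_le_mul_of_nonneg_right _ (by positivity)
    apply Real.log_le_log (by positivity)
    have : t ^ 2 / a ^ 2 ≤ t ^ 2 := by
      apply div_le_self (by positivity)
      nlinarith
    linarith
  · have : (fun t : ℝ => Real.log (1 + t ^ 2) * (b ^ 2 + t ^ 2)⁻¹)
        = fun t : ℝ => Real.log (1 ^ 2 + t ^ 2) * (b ^ 2 + t ^ 2)⁻¹ := by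
      simp
    rw [this]
    exact integrable_log_kernel one_pos hb
  · filter_upwards with t
    have h1 : Tendsto (fun a : ℝ => t ^ 2 / a ^ 2) atTop (nhds 0) :=
      tendsto_const_nhds.div_atTop (tendsto_pow_atTop two_ne_zero)
    have h2 : Tendsto (fun a : ℝ => 1 + t ^ 2 / a ^ 2) atTop (nhds 1) := by
      simpa using tendsto_const_nhds.add h1
    have h3 : Tendsto (fun a : ℝ => Real.log (1 + t ^ 2 / a ^ 2)) atTop (nhds 0) := by
      have := (Real.continuousAt_log one_ne_zero).tendsto.comp h2
      simpa [Function.comp_def] using this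
    simpa using h3.mul_const ((b ^ 2 + t ^ 2)⁻¹)

lemma hasDerivAt_G {b : ℝ} (hb : 0 < b) {x : ℝ} (hx : 0 < x) :
    HasDerivAt (fun y : ℝ => (∫ t : ℝ, Real.log (y ^ 2 + t ^ 2) * (b ^ 2 + t ^ 2)⁻¹)
        - 2 * π / b * Real.log (y + b))
      ((∫ t : ℝ, 2 * x / (x ^ 2 + t ^ 2) * (b ^ 2 + t ^ 2)⁻¹) - 2 * π / (b * (x + b))) x := by
  have h1 := hasDerivAt_F hb hx
  have h2 : HasDerivAt (fun y : ℝ => 2 * π / b * Real.log (y + b))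
      (2 * π / b * (x + b)⁻¹) x := by
    have := (((hasDerivAt_id x).add_const b).log (by positivity)).const_mul (2 * π / b)
    simpa [one_div] using this
  have := h1.sub h2
  have he : 2 * π / b * (x + b)⁻¹ = 2 * π / (b * (x + b)) := by
    field_simp
  rwa [he] at this

lemma G_const {b : ℝ} (hb : 0 < b) :
    ∀ x y : ℝ, 0 < x → x ≤ y →
      ((∫ t : ℝ, Real.log (x ^ 2 + t ^ 2) * (b ^ 2 + t ^ 2)⁻¹) - 2 * π / b * Real.log (x + b))
      = (∫ t : ℝ, Real.log (y ^ 2 + t ^ 2) * (b ^ 2 + t ^ 2)⁻¹) - 2 * π / b * Real.log (y + b) := by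
  set G := fun y : ℝ => (∫ t : ℝ, Real.log (y ^ 2 + t ^ 2) * (b ^ 2 + t ^ 2)⁻¹)
      - 2 * π / b * Real.log (y + b) with hG
  have hderiv0 : ∀ z : ℝ, 0 < z → z ≠ b → deriv G z = 0 := by
    intro z hz hzb
    have h := hasDerivAt_G hb hz
    rw [integral_F' hz hb hzb, sub_self] at h
    exact h.deriv
  have key : ∀ x y : ℝ, 0 < x → x ≤ y → b ∉ Ioo x y → G x = G y := by
    intro x y hx hxy hbm
    have hconv : Convex ℝ (Icc x y) := convex_Icc x y
    have hcont : ContinuousOn G (Icc x y) := by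
      intro z hz
      have hz0 : 0 < z := lt_of_lt_of_le hx hz.1
      exact ((hasDerivAt_G hb hz0).continuousAt).continuousWithinAt
    have hdiff : DifferentiableOn ℝ G (interior (Icc x y)) := by
      intro z hz
      rw [interior_Icc] at hz
      have hz0 : 0 < z := lt_trans hx hz.1
      exact ((hasDerivAt_G hb hz0).differentiableAt).differentiableWithinAt
    have hd0 : ∀ z ∈ interior (Icc x y), deriv G z = 0 := by
      intro z hz
      rw [interior_Icc] at hz
      exact hderiv0 z (lt_trans hx hz.1) (fun h => hbm (h ▸ hz))
    have hmono : MonotoneOn G (Icc x y) :=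
      monotoneOn_of_deriv_nonneg hconv hcont hdiff (fun z hz => le_of_eq (hd0 z hz).symm)
    have hanti : AntitoneOn G (Icc x y) :=
      antitoneOn_of_deriv_nonpos hconv hcont hdiff (fun z hz => le_of_eq (hd0 z hz))
    have hxm : x ∈ Icc x y := ⟨le_refl x, hxy⟩
    have hym : y ∈ Icc x y := ⟨hxy, le_refl y⟩
    exact le_antisymm (hmono hxm hym hxy) (hanti hxm hym hxy)
  intro x y hx hxy
  by_cases hbm : b ∈ Ioo x y
  · have h1 : G x = G b := key x b hx hbm.1.le (fun h => absurd h.2 (lt_irrefl b))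
    have h2 : G b = G y := key b y hb hbm.2.le (fun h => absurd h.1 (lt_irrefl b))
    exact h1.trans h2
  · exact key x y hx hxy hbm

lemma F_value {b : ℝ} (hb : 0 < b) {a : ℝ} (ha : 0 < a) :
    ∫ t : ℝ, Real.log (a ^ 2 + t ^ 2) * (b ^ 2 + t ^ 2)⁻¹ = 2 * π / b * Real.log (a + b) := by
  set G := fun y : ℝ => (∫ t : ℝ, Real.log (y ^ 2 + t ^ 2) * (b ^ 2 + t ^ 2)⁻¹)
      - 2 * π / b * Real.log (y + b) with hGdef
  have htend : Tendsto G atTop (nhds 0) := by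
    have h1 : ∀ᶠ y in atTop, G y
        = (∫ t : ℝ, Real.log (1 + t ^ 2 / y ^ 2) * (b ^ 2 + t ^ 2)⁻¹)
          + 2 * π / b * (Real.log y - Real.log (y + b)) := by
      filter_upwards [eventually_gt_atTop (0 : ℝ)] with y hy
      rw [hGdef]
      simp only
      rw [F_decomp hy hb, Real.log_pow]
      push_cast
      ring
    have h3 : Tendsto (fun y : ℝ => y / (y + b)) atTop (nhds 1) := by
      have heq : (fun y : ℝ => y / (y + b)) =ᶠ[atTop] fun y => (1 + b / y)⁻¹ := by
        filter_upwards [eventually_gt_atTop (0 : ℝ)] with y hy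
        rw [eq_comm, inv_eq_iff_eq_inv, inv_div]
        field_simp
      have hb0 : Tendsto (fun y : ℝ => b / y) atTop (nhds 0) :=
        tendsto_const_nhds.div_atTop tendsto_id
      have h5 : Tendsto (fun y : ℝ => 1 + b / y) atTop (nhds 1) := by
        simpa using tendsto_const_nhds.add hb0
      have h6 : Tendsto (fun y : ℝ => (1 + b / y)⁻¹) atTop (nhds 1) := by
        simpa using h5.inv₀ one_ne_zero
      exact h6.congr' heq.symm
    have h4 : Tendsto (fun y : ℝ => Real.log y - Real.log (y + b)) atTop (nhds 0) := by
      have h7 := (Real.continuousAt_log one_ne_zero).tendsto.comp h3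
      simp only [Function.comp, Real.log_one] at h7
      apply h7.congr'
      filter_upwards [eventually_gt_atTop (0 : ℝ)] with y hy
      show Real.log (y / (y + b)) = _
      rw [Real.log_div hy.ne' (by positivity)]
    have hrhs : Tendsto (fun y : ℝ => (∫ t : ℝ, Real.log (1 + t ^ 2 / y ^ 2) * (b ^ 2 + t ^ 2)⁻¹)
        + 2 * π / b * (Real.log y - Real.log (y + b))) atTop (nhds 0) := by
      have := (tendsto_J hb).add ((h4.const_mul (2 * π / b)))
      simpa using this
    exact hrhs.congr' (h1.mono fun y hy => hy.symm)
  have hconst : ∀ᶠ y in atTop, G y = G a := by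
    filter_upwards [eventually_ge_atTop a] with y hy
    exact (G_const hb a y ha hy).symm
  have : Tendsto (fun _ : ℝ => G a) atTop (nhds 0) := htend.congr' hconst
  have hGa : G a = 0 := tendsto_nhds_unique tendsto_const_nhds this
  have := hGa
  rw [hGdef] at this
  simp only at this
  linarith [this]

theorem poisson_log_abs_linear (ρ ρ₀ : ℝ) (hρ₀ : 0 < ρ₀) (hρ : ρ ≠ 1) :
    (ρ₀ / π) * ∫ t : ℝ, Real.log ‖((1 : ℂ) - ρ + t * Complex.I)‖ / (ρ₀ ^ 2 + t ^ 2)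
      = Real.log (|1 - ρ| + ρ₀) := by
  have ha : 0 < |1 - ρ| := abs_pos.2 (sub_ne_zero.2 (Ne.symm hρ))
  have hint : ∀ t : ℝ, Real.log ‖((1 : ℂ) - ρ + t * Complex.I)‖ / (ρ₀ ^ 2 + t ^ 2)
      = (1/2) * (Real.log (|1 - ρ| ^ 2 + t ^ 2) * (ρ₀ ^ 2 + t ^ 2)⁻¹) := by
    intro t
    have habs : ‖((1 : ℂ) - ρ + t * Complex.I)‖
        = Real.sqrt (|1 - ρ| ^ 2 + t ^ 2) := by
      rw [Complex.norm_def, Complex.normSq_apply]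
      congr 1
      simp [sq_abs]
      ring
    rw [habs, Real.log_sqrt (by positivity)]
    ring
  simp_rw [hint]
  rw [MeasureTheory.integral_const_mul, F_value hρ₀ ha]
  field_simp [Real.pi_ne_zero]
end

section
/- For real a > 0 and real b, (1/π) ∫_{-∞}^{∞} a·ln(b² + t²) / (a² + t²) dt = 2·ln(|b| + a). -/
open MeasureTheory Real Filter Set



-- basic positivity
lemma sq_add_sq_pos {a : ℝ} (ha : a ≠ 0) (t : ℝ) : 0 < a ^ 2 + t ^ 2 := by positivity

-- comparison of kernels
lemma inv_kernel_le {a : ℝ} (ha : 0 < a) (t : ℝ) :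
    (a ^ 2 + t ^ 2)⁻¹ ≤ (min (a ^ 2) 1)⁻¹ * (1 + t ^ 2)⁻¹ := by
  have hm : 0 < min (a ^ 2) 1 := by positivity
  rw [← mul_inv]
  apply inv_anti₀ (by positivity)
  have h1 : min (a ^ 2) 1 * 1 ≤ a ^ 2 := by
    rw [mul_one]; exact min_le_left _ _
  have h2 : min (a ^ 2) 1 * t ^ 2 ≤ 1 * t ^ 2 := by
    apply mul_le_mul_of_nonneg_right (min_le_right _ _) (by positivity)
  nlinarith
-- integrability of the Cauchy kernel
lemma integrable_inv_kernel {a : ℝ} (ha : 0 < a) :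
    Integrable fun t : ℝ => (a ^ 2 + t ^ 2)⁻¹ := by
  have hm : 0 < min (a ^ 2) 1 := by positivity
  refine (integrable_inv_one_add_sq.const_mul (min (a ^ 2) 1)⁻¹).mono'
    (Measurable.aestronglyMeasurable (by fun_prop)) ?_
  filter_upwards with t
  rw [Real.norm_eq_abs, abs_of_pos (by positivity : (0:ℝ) < (a ^ 2 + t ^ 2)⁻¹)]
  exact inv_kernel_le ha t

-- the Cauchy integral
lemma integral_inv_kernel {a : ℝ} (ha : 0 < a) :
    ∫ t : ℝ, (a ^ 2 + t ^ 2)⁻¹ = π / a := by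
  have h := MeasureTheory.Measure.integral_comp_mul_left
    (fun x : ℝ => (a ^ 2 + x ^ 2)⁻¹) a
  have h2 : ∀ x : ℝ, (a ^ 2 + (a * x) ^ 2)⁻¹ = (a^2)⁻¹ * (1 + x ^ 2)⁻¹ := by
    intro x
    rw [← mul_inv]
    congr 1
    ring
  simp only [h2] at h
  rw [integral_const_mul, integral_univ_inv_one_add_sq, abs_of_pos (inv_pos.2 ha), smul_eq_mul] at h
  have key : a * ((a ^ 2)⁻¹ * π) = ∫ y : ℝ, (a ^ 2 + y ^ 2)⁻¹ := by
    rw [h, ← mul_assoc, mul_inv_cancel₀ ha.ne', one_mul]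
  rw [← key]
  field_simp



-- the two-pole integral
lemma integral_two_poles {a u : ℝ} (ha : 0 < a) (hu : 0 < u) (hne : u ≠ a) :
    ∫ t : ℝ, (a ^ 2 + t ^ 2)⁻¹ * (u ^ 2 + t ^ 2)⁻¹ = π / (a * u * (a + u)) := by
  have hd : u ^ 2 - a ^ 2 ≠ 0 := by
    intro h
    apply hne
    nlinarith
  have key : ∀ t : ℝ, (a ^ 2 + t ^ 2)⁻¹ * (u ^ 2 + t ^ 2)⁻¹
      = (u ^ 2 - a ^ 2)⁻¹ * ((a ^ 2 + t ^ 2)⁻¹ - (u ^ 2 + t ^ 2)⁻¹) := by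
    intro t
    have h1 : a ^ 2 + t ^ 2 ≠ 0 := by positivity
    have h2 : u ^ 2 + t ^ 2 ≠ 0 := by positivity
    field_simp
    ring
  simp only [key]
  rw [integral_const_mul, integral_sub (integrable_inv_kernel ha) (integrable_inv_kernel hu),
    integral_inv_kernel ha, integral_inv_kernel hu]
  field_simp
  ring


lemma log_le_rpow (s : ℝ) (hs : 0 < s) : Real.log s ≤ 4 * s ^ ((1:ℝ)/4) := by
  have h1 : Real.log s = 4 * Real.log (s ^ ((1:ℝ)/4)) := by
    rw [Real.log_rpow hs]; ring
  rw [h1]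
  have h2 : Real.log (s ^ ((1:ℝ)/4)) ≤ s ^ ((1:ℝ)/4) - 1 :=
    Real.log_le_sub_one_of_pos (rpow_pos_of_pos hs _)
  nlinarith [rpow_pos_of_pos hs ((1:ℝ)/4)]

lemma meas_log_kernel (c : ℝ → ℝ) (hc : Measurable c) :
    Measurable fun t : ℝ => Real.log (c t) := Real.measurable_log.comp hc

lemma integrable_log_base : Integrable fun t : ℝ => Real.log (1 + t ^ 2) * (1 + t ^ 2)⁻¹ := by
  have hint : Integrable fun t : ℝ => ((1:ℝ) + ‖t‖ ^ 2) ^ (-(3/2 : ℝ) / 2) := by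
    apply integrable_rpow_neg_one_add_norm_sq
    norm_num
  have hmeas : Measurable fun t : ℝ => Real.log (1 + t ^ 2) * (1 + t ^ 2)⁻¹ :=
    (Real.measurable_log.comp (by fun_prop)).mul (by fun_prop)
  refine (hint.const_mul 4).mono' hmeas.aestronglyMeasurable ?_
  filter_upwards with t
  have h1 : (0:ℝ) < 1 + t ^ 2 := by positivity
  have h2 : (0:ℝ) ≤ Real.log (1 + t ^ 2) := Real.log_nonneg (by nlinarith)
  rw [Real.norm_eq_abs, abs_of_nonneg (by positivity)]
  have h3 : Real.log (1 + t ^ 2) * (1 + t ^ 2)⁻¹ ≤ (4 * (1 + t ^ 2) ^ ((1:ℝ)/4)) * (1 + t ^ 2)⁻¹ :=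
    mul_le_mul_of_nonneg_right (log_le_rpow _ h1) (by positivity)
  refine h3.trans (le_of_eq ?_)
  have h4 : ((1:ℝ) + t ^ 2) ^ ((1:ℝ)/4) * (1 + t ^ 2)⁻¹ = (1 + t ^ 2) ^ (-(3/2 : ℝ) / 2) := by
    rw [← Real.rpow_neg_one (1 + t ^ 2), ← Real.rpow_add h1]
    norm_num
  rw [Real.norm_eq_abs, sq_abs, mul_assoc, h4]



-- |t| ^ (-1/2) is interval integrable / integrable on [-1,1]
lemma integrableOn_abs_rpow_neg_half :
    IntegrableOn (fun t : ℝ => |t| ^ (-(1:ℝ)/2)) (Icc (-1) 1) := by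
  have h01 : IntegrableOn (fun t : ℝ => |t| ^ (-(1:ℝ)/2)) (Ioc 0 1) := by
    have := intervalIntegral.intervalIntegrable_rpow' (a := 0) (b := 1) (r := -(1:ℝ)/2) (by norm_num)
    rw [intervalIntegrable_iff_integrableOn_Ioc_of_le zero_le_one] at this
    refine this.congr_fun (fun t ht => ?_) measurableSet_Ioc
    rw [abs_of_pos ht.1]
  have hneg : IntegrableOn (fun t : ℝ => |t| ^ (-(1:ℝ)/2)) (Ioc (-1) 0) := by
    have h2 : IntervalIntegrable (fun t : ℝ => |t| ^ (-(1:ℝ)/2)) volume 0 1 := by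
      rw [intervalIntegrable_iff_integrableOn_Ioc_of_le zero_le_one]; exact h01
    have h3 := (IntervalIntegrable.iff_comp_neg).mp h2
    simp only [abs_neg, neg_zero] at h3
    have h4 := h3.symm
    rwa [intervalIntegrable_iff_integrableOn_Ioc_of_le (by norm_num : (-1:ℝ) ≤ 0)] at h4
  have : IntegrableOn (fun t : ℝ => |t| ^ (-(1:ℝ)/2)) (Ioc (-1) 0 ∪ Ioc 0 1) := hneg.union h01
  apply this.mono_set_ae
  rw [show Ioc (-1:ℝ) 0 ∪ Ioc 0 1 = Ioc (-1) 1 from Ioc_union_Ioc_eq_Ioc (by norm_num) (by norm_num)]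
  exact (Ioc_ae_eq_Icc (α := ℝ)).symm.le



lemma neg_log_sq_le (t : ℝ) : -Real.log (t ^ 2) ≤ 4 * |t| ^ (-(1:ℝ)/2) := by
  rcases eq_or_ne t 0 with rfl | ht
  · simp
  · have h2 : (0:ℝ) < t ^ 2 := by positivity
    have h3 : -Real.log (t ^ 2) = Real.log ((t ^ 2)⁻¹) := (Real.log_inv _).symm
    rw [h3]
    refine (log_le_rpow _ (by positivity)).trans (le_of_eq ?_)
    congr 1
    rw [← Real.rpow_neg_one (t ^ 2), ← sq_abs t, ← Real.rpow_natCast |t| 2,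
      ← Real.rpow_mul (abs_nonneg t), ← Real.rpow_mul (abs_nonneg t)]
    norm_num

lemma abs_log_sq_le (t : ℝ) : |Real.log (t ^ 2)| ≤ 4 * |t| ^ (-(1:ℝ)/2) + Real.log (1 + t ^ 2) := by
  rcases eq_or_ne t 0 with rfl | ht
  · simp
  have h2 : (0:ℝ) < t ^ 2 := by positivity
  have hup : Real.log (t ^ 2) ≤ Real.log (1 + t ^ 2) := Real.log_le_log h2 (by nlinarith)
  have hlow := neg_log_sq_le t
  have h4 : (0:ℝ) ≤ Real.log (1 + t ^ 2) := Real.log_nonneg (by nlinarith)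
  have h5 : (0:ℝ) ≤ 4 * |t| ^ (-(1:ℝ)/2) := by positivity
  rw [abs_le]
  constructor <;> linarith

lemma integrable_log_one_add_kernel {a : ℝ} (ha : 0 < a) :
    Integrable fun t : ℝ => Real.log (1 + t ^ 2) * (a ^ 2 + t ^ 2)⁻¹ := by
  have hm : (0:ℝ) < min (a ^ 2) 1 := by positivity
  refine (integrable_log_base.const_mul (min (a ^ 2) 1)⁻¹).mono'
    ((Real.measurable_log.comp (by fun_prop)).mul (by fun_prop)).aestronglyMeasurable ?_
  filter_upwards with t
  have h4 : (0:ℝ) ≤ Real.log (1 + t ^ 2) := Real.log_nonneg (by nlinarith)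
  rw [Real.norm_eq_abs, abs_of_nonneg (by positivity)]
  calc Real.log (1 + t ^ 2) * (a ^ 2 + t ^ 2)⁻¹
      ≤ Real.log (1 + t ^ 2) * ((min (a ^ 2) 1)⁻¹ * (1 + t ^ 2)⁻¹) :=
        mul_le_mul_of_nonneg_left (inv_kernel_le ha t) h4
    _ = (min (a ^ 2) 1)⁻¹ * (Real.log (1 + t ^ 2) * (1 + t ^ 2)⁻¹) := by ring

lemma integrable_abs_log_sq_kernel {a : ℝ} (ha : 0 < a) :
    Integrable fun t : ℝ => |Real.log (t ^ 2)| * (a ^ 2 + t ^ 2)⁻¹ := by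
  have hind : Integrable fun t : ℝ =>
      (a ^ 2)⁻¹ * ((Icc (-1:ℝ) 1).indicator (fun s => 4 * |s| ^ (-(1:ℝ)/2)) t) := by
    apply Integrable.const_mul
    rw [integrable_indicator_iff measurableSet_Icc]
    exact integrableOn_abs_rpow_neg_half.const_mul 4
  refine (hind.add (integrable_log_one_add_kernel ha)).mono'
    (((Real.measurable_log.comp (by fun_prop)).abs.mul (by fun_prop)).aestronglyMeasurable) ?_
  filter_upwards with t
  rw [Real.norm_eq_abs, abs_of_nonneg (by positivity)]
  have h4 : (0:ℝ) ≤ Real.log (1 + t ^ 2) := Real.log_nonneg (by nlinarith)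
  have hainv : (a ^ 2 + t ^ 2)⁻¹ ≤ (a ^ 2)⁻¹ := by
    apply inv_anti₀ (by positivity); nlinarith
  have hker : (0:ℝ) < (a ^ 2 + t ^ 2)⁻¹ := by positivity
  by_cases hcase : |t| ≤ 1
  · -- t ∈ Icc
    have hmem : t ∈ Icc (-1:ℝ) 1 := by rw [mem_Icc]; exact abs_le.mp hcase
    simp only [Pi.add_apply]
    rw [indicator_of_mem hmem]
    have hneg : |Real.log (t ^ 2)| = -Real.log (t ^ 2) := by
      rcases eq_or_ne t 0 with rfl | ht
      · simp
      · rw [abs_of_nonpos]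
        apply Real.log_nonpos (by positivity)
        nlinarith [sq_abs t, abs_nonneg t]
    have hb := neg_log_sq_le t
    have h5 : (0:ℝ) ≤ 4 * |t| ^ (-(1:ℝ)/2) := by positivity
    have : |Real.log (t ^ 2)| * (a ^ 2 + t ^ 2)⁻¹ ≤ (4 * |t| ^ (-(1:ℝ)/2)) * (a ^ 2)⁻¹ := by
      rw [hneg]
      apply mul_le_mul (by linarith) hainv hker.le h5
    refine this.trans ?_
    have h6 : (0:ℝ) ≤ Real.log (1 + t ^ 2) * (a ^ 2 + t ^ 2)⁻¹ := by positivity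
    nlinarith [h6]
  · -- |t| > 1
    push_neg at hcase
    have hmem : t ∉ Icc (-1:ℝ) 1 := by rw [mem_Icc, ← abs_le]; exact not_le.2 hcase
    simp only [Pi.add_apply]
    rw [indicator_of_notMem hmem]
    have h2 : (0:ℝ) < t ^ 2 := by nlinarith [abs_nonneg t, sq_abs t]
    have habs : |Real.log (t ^ 2)| = Real.log (t ^ 2) := by
      rw [abs_of_nonneg]
      apply Real.log_nonneg
      nlinarith [sq_abs t]
    rw [habs]
    have : Real.log (t ^ 2) ≤ Real.log (1 + t ^ 2) := Real.log_le_log h2 (by nlinarith)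
    have h7 : (0:ℝ) ≤ (a ^ 2)⁻¹ * 0 := by norm_num
    have := mul_le_mul_of_nonneg_right this hker.le
    simp only [mul_zero, zero_add]
    linarith

lemma abs_log_add_le {x : ℝ} (hx : x ≠ 0) (t : ℝ) :
    |Real.log (x ^ 2 + t ^ 2)| ≤ |Real.log (x ^ 2)| + Real.log (1 + x ^ 2) + Real.log (1 + t ^ 2) := by
  have hx2 : (0:ℝ) < x ^ 2 := by positivity
  have hup : Real.log (x ^ 2 + t ^ 2) ≤ Real.log (1 + x ^ 2) + Real.log (1 + t ^ 2) := by
    rw [← Real.log_mul (by positivity) (by positivity)]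
    exact Real.log_le_log (by positivity) (by nlinarith)
  have hlow : Real.log (x ^ 2) ≤ Real.log (x ^ 2 + t ^ 2) := Real.log_le_log hx2 (by nlinarith)
  have h1 : (0:ℝ) ≤ Real.log (1 + x ^ 2) := Real.log_nonneg (by nlinarith)
  have h2 : (0:ℝ) ≤ Real.log (1 + t ^ 2) := Real.log_nonneg (by nlinarith)
  have h3 := abs_nonneg (Real.log (x ^ 2))
  have h4 := neg_abs_le (Real.log (x ^ 2))
  rw [abs_le]
  constructor <;> linarith

lemma integrable_main_pos {a x : ℝ} (ha : 0 < a) (hx : x ≠ 0) :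
    Integrable fun t : ℝ => a * Real.log (x ^ 2 + t ^ 2) / (a ^ 2 + t ^ 2) := by
  set C := |Real.log (x ^ 2)| + Real.log (1 + x ^ 2) with hC
  have hint : Integrable fun t : ℝ =>
      a * C * (a ^ 2 + t ^ 2)⁻¹ + a * (Real.log (1 + t ^ 2) * (a ^ 2 + t ^ 2)⁻¹) :=
    ((integrable_inv_kernel ha).const_mul _).add ((integrable_log_one_add_kernel ha).const_mul a)
  refine hint.mono'
    ((measurable_const.mul (Real.measurable_log.comp (by fun_prop))).div (by fun_prop)).aestronglyMeasurable ?_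
  filter_upwards with t
  have hker : (0:ℝ) < (a ^ 2 + t ^ 2)⁻¹ := by positivity
  have h2 : (0:ℝ) ≤ Real.log (1 + t ^ 2) := Real.log_nonneg (by nlinarith)
  rw [Real.norm_eq_abs, div_eq_mul_inv, abs_mul, abs_mul, abs_of_pos ha, abs_of_pos hker]
  have hb := abs_log_add_le hx t
  have : a * |Real.log (x ^ 2 + t ^ 2)| * (a ^ 2 + t ^ 2)⁻¹
      ≤ a * (C + Real.log (1 + t ^ 2)) * (a ^ 2 + t ^ 2)⁻¹ := by
    apply mul_le_mul_of_nonneg_right _ hker.le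
    apply mul_le_mul_of_nonneg_left _ ha.le
    rw [hC]; linarith
  refine this.trans (le_of_eq (by ring))

lemma integrable_main_zero {a : ℝ} (ha : 0 < a) :
    Integrable fun t : ℝ => a * Real.log (t ^ 2) / (a ^ 2 + t ^ 2) := by
  refine ((integrable_abs_log_sq_kernel ha).const_mul a).mono'
    ((measurable_const.mul (Real.measurable_log.comp (by fun_prop))).div (by fun_prop)).aestronglyMeasurable ?_
  filter_upwards with t
  have hker : (0:ℝ) < (a ^ 2 + t ^ 2)⁻¹ := by positivity
  rw [Real.norm_eq_abs, div_eq_mul_inv, abs_mul, abs_mul, abs_of_pos ha, abs_of_pos hker]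
  apply le_of_eq; ring



lemma F_diff {a y x : ℝ} (ha : 0 < a) (hy : 0 < y) (hyx : y ≤ x) :
    (∫ t : ℝ, a * Real.log (x ^ 2 + t ^ 2) / (a ^ 2 + t ^ 2))
      - (∫ t : ℝ, a * Real.log (y ^ 2 + t ^ 2) / (a ^ 2 + t ^ 2))
      = 2 * π * Real.log (a + x) - 2 * π * Real.log (a + y) := by
  have hx : 0 < x := lt_of_lt_of_le hy hyx
  -- the double-integral integrand
  set f : ℝ → ℝ → ℝ := fun t u => 2 * u * (u ^ 2 + t ^ 2)⁻¹ * (a * (a ^ 2 + t ^ 2)⁻¹) with hf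
  -- step 1: combine into one integral
  rw [← integral_sub (integrable_main_pos ha hx.ne') (integrable_main_pos ha hy.ne')]
  -- step 2: rewrite integrand as an inner integral over u
  have key : ∀ t : ℝ,
      a * Real.log (x ^ 2 + t ^ 2) / (a ^ 2 + t ^ 2) - a * Real.log (y ^ 2 + t ^ 2) / (a ^ 2 + t ^ 2)
      = ∫ u in Ioc y x, f t u := by
    intro t
    have hlog : Real.log (x ^ 2 + t ^ 2) - Real.log (y ^ 2 + t ^ 2)
        = ∫ u in y..x, 2 * u * (u ^ 2 + t ^ 2)⁻¹ := by
      have hderiv : ∀ u ∈ uIcc y x,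
          HasDerivAt (fun v : ℝ => Real.log (v ^ 2 + t ^ 2)) (2 * u * (u ^ 2 + t ^ 2)⁻¹) u := by
        intro u hu
        rw [uIcc_of_le hyx] at hu
        have hu0 : 0 < u := lt_of_lt_of_le hy hu.1
        have hne : u ^ 2 + t ^ 2 ≠ 0 := by positivity
        have h1 : HasDerivAt (fun v : ℝ => v ^ 2 + t ^ 2) (2 * u) u := by
          simpa using (hasDerivAt_pow 2 u).add_const (t ^ 2)
        simpa [div_eq_mul_inv] using h1.log hne
      have hcont : IntervalIntegrable (fun u : ℝ => 2 * u * (u ^ 2 + t ^ 2)⁻¹) volume y x := by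
        apply ContinuousOn.intervalIntegrable
        apply ContinuousOn.mul (by fun_prop)
        apply ContinuousOn.inv₀ (by fun_prop)
        intro u hu
        rw [uIcc_of_le hyx] at hu
        have hu0 : 0 < u := lt_of_lt_of_le hy hu.1
        positivity
      rw [intervalIntegral.integral_eq_sub_of_hasDerivAt hderiv hcont]
    have expand : a * Real.log (x ^ 2 + t ^ 2) / (a ^ 2 + t ^ 2)
          - a * Real.log (y ^ 2 + t ^ 2) / (a ^ 2 + t ^ 2)
        = (Real.log (x ^ 2 + t ^ 2) - Real.log (y ^ 2 + t ^ 2)) * (a * (a ^ 2 + t ^ 2)⁻¹) := by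
      field_simp
    rw [expand, hlog, intervalIntegral.integral_of_le hyx, ← integral_mul_const]
  simp only [key]
  -- step 3: Fubini
  have hmeas : AEStronglyMeasurable (Function.uncurry f)
      (volume.prod (volume.restrict (Ioc y x))) := by
    apply Measurable.aestronglyMeasurable
    fun_prop
  have hprod : Integrable (Function.uncurry f) (volume.prod (volume.restrict (Ioc y x))) := by
    rw [integrable_prod_iff hmeas]
    constructor
    · filter_upwards with t
      have : IntegrableOn (fun u => f t u) (Icc y x) := by
        apply ContinuousOn.integrableOn_Icc
        apply ContinuousOn.mul
        apply ContinuousOn.mul (by fun_prop)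
        · apply ContinuousOn.inv₀ (by fun_prop)
          intro u hu
          have hu0 : 0 < u := lt_of_lt_of_le hy hu.1
          positivity
        · exact continuousOn_const
      exact this.mono_set Ioc_subset_Icc_self
    · have hb : ∀ t : ℝ, ‖∫ u in Ioc y x, ‖f t u‖‖
          ≤ (2 * x * (y ^ 2)⁻¹ * a * (x - y)) * (a ^ 2 + t ^ 2)⁻¹ := by
        intro t
        have hmle : (volume (Ioc y x)) < ⊤ := by
          rw [Real.volume_Ioc]; exact ENNReal.ofReal_lt_top
        have := norm_setIntegral_le_of_norm_le_const (μ := volume) (s := Ioc y x)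
          (f := fun u => ‖f t u‖) (C := 2 * x * (y ^ 2)⁻¹ * (a * (a ^ 2 + t ^ 2)⁻¹)) hmle
          ?_
        · refine this.trans (le_of_eq ?_)
          rw [measureReal_def, Real.volume_Ioc, ENNReal.toReal_ofReal (by linarith)]
          ring
        · intro u hu
          have hu0 : 0 < u := lt_of_lt_of_le hy hu.1.le
          have hker : (0:ℝ) < a * (a ^ 2 + t ^ 2)⁻¹ := by positivity
          rw [norm_norm, hf, Real.norm_eq_abs, abs_of_nonneg (by positivity)]
          apply mul_le_mul _ le_rfl hker.le (by positivity)
          have h1 : (u ^ 2 + t ^ 2)⁻¹ ≤ (y ^ 2)⁻¹ := by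
            apply inv_anti₀ (by positivity)
            nlinarith [hu.1, hu.2]
          calc 2 * u * (u ^ 2 + t ^ 2)⁻¹ ≤ 2 * x * (u ^ 2 + t ^ 2)⁻¹ := by
                apply mul_le_mul_of_nonneg_right (by linarith [hu.2]) (by positivity)
            _ ≤ 2 * x * (y ^ 2)⁻¹ := by
                apply mul_le_mul_of_nonneg_left h1 (by positivity)
      refine (((integrable_inv_kernel ha).const_mul (2 * x * (y ^ 2)⁻¹ * a * (x - y))).mono'
        (hmeas.norm.integral_prod_right') ?_)
      filter_upwards with t
      exact hb t
  rw [MeasureTheory.integral_integral_swap hprod]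
  -- step 4: evaluate the inner integral
  have hae : ∀ᵐ u : ℝ, u ≠ a := by
    refine ae_iff.mpr ?_
    have : {u : ℝ | ¬u ≠ a} = {a} := by ext v; simp
    rw [this]
    exact measure_singleton a
  have step4 : ∫ u in Ioc y x, (∫ t, f t u) = ∫ u in Ioc y x, 2 * π / (a + u) := by
    apply integral_congr_ae
    have hmem := ae_restrict_mem (μ := volume) (measurableSet_Ioc (a := y) (b := x))
    filter_upwards [hmem, ae_restrict_of_ae hae] with u hu hua
    have hu0 : 0 < u := lt_of_lt_of_le hy hu.1.le
    have hrw : (fun t => f t u) = fun t : ℝ =>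
        (2 * u * a) * ((a ^ 2 + t ^ 2)⁻¹ * (u ^ 2 + t ^ 2)⁻¹) := by
      funext t; rw [hf]; ring
    rw [hrw, integral_const_mul, integral_two_poles ha hu0 hua]
    field_simp
  rw [step4, ← intervalIntegral.integral_of_le hyx]
  -- step 5: FTC
  have hderiv2 : ∀ u ∈ uIcc y x,
      HasDerivAt (fun v : ℝ => 2 * π * Real.log (a + v)) (2 * π / (a + u)) u := by
    intro u hu
    rw [uIcc_of_le hyx] at hu
    have hu0 : 0 < u := lt_of_lt_of_le hy hu.1
    have hne : a + u ≠ 0 := by positivity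
    have h1 : HasDerivAt (fun v : ℝ => a + v) 1 u := (hasDerivAt_id u).const_add a
    have h2 := (h1.log hne).const_mul (2 * π)
    simpa [div_eq_mul_inv, mul_comm, mul_assoc] using h2
  have hcont2 : IntervalIntegrable (fun u : ℝ => 2 * π / (a + u)) volume y x := by
    apply ContinuousOn.intervalIntegrable
    apply ContinuousOn.div (by fun_prop) (by fun_prop)
    intro u hu
    rw [uIcc_of_le hyx] at hu
    have hu0 : 0 < u := lt_of_lt_of_le hy hu.1
    positivity
  rw [intervalIntegral.integral_eq_sub_of_hasDerivAt hderiv2 hcont2]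



lemma F_tendsto {a : ℝ} (ha : 0 < a) :
    Tendsto (fun x : ℝ => (∫ t : ℝ, a * Real.log (x ^ 2 + t ^ 2) / (a ^ 2 + t ^ 2))
      - 2 * π * Real.log (a + x)) atTop (nhds 0) := by
  -- rewrite as a single integral, eventually in x
  have heq : ∀ᶠ x in atTop, (∫ t : ℝ, a * Real.log (x ^ 2 + t ^ 2) / (a ^ 2 + t ^ 2))
      - 2 * π * Real.log (a + x)
      = ∫ t : ℝ, a * Real.log ((x ^ 2 + t ^ 2) / ((a + x) ^ 2)) / (a ^ 2 + t ^ 2) := by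
    filter_upwards [eventually_ge_atTop (1:ℝ)] with x hx1
    have hx : (0:ℝ) < x := lt_of_lt_of_le one_pos hx1
    have hax : (0:ℝ) < a + x := by linarith
    have hconst : Integrable fun t : ℝ =>
        (a * Real.log ((a + x) ^ 2)) * (a ^ 2 + t ^ 2)⁻¹ :=
      (integrable_inv_kernel ha).const_mul _
    have hval : ∫ t : ℝ, (a * Real.log ((a + x) ^ 2)) * (a ^ 2 + t ^ 2)⁻¹
        = 2 * π * Real.log (a + x) := by
      rw [integral_const_mul, integral_inv_kernel ha, Real.log_pow]
      push_cast
      field_simp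
    rw [← hval, ← integral_sub (integrable_main_pos ha hx.ne') hconst]
    apply integral_congr_ae
    filter_upwards with t
    have h1 : (0:ℝ) < x ^ 2 + t ^ 2 := by positivity
    have h2 : (0:ℝ) < (a + x) ^ 2 := by positivity
    rw [Real.log_div h1.ne' h2.ne']
    field_simp
  rw [show (0:ℝ) = ∫ t : ℝ, (0:ℝ) from (integral_zero ℝ ℝ).symm]
  apply Tendsto.congr' (heq.mono fun x h => h.symm)
  apply tendsto_integral_filter_of_dominated_convergence
    (fun t => a * (Real.log (1 + t ^ 2) + 2 * Real.log (1 + a)) * (a ^ 2 + t ^ 2)⁻¹)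
  · filter_upwards with x
    exact ((measurable_const.mul (Real.measurable_log.comp (by fun_prop))).div
      (by fun_prop)).aestronglyMeasurable
  · filter_upwards [eventually_ge_atTop (1:ℝ)] with x hx1
    filter_upwards with t
    have hx : (0:ℝ) < x := lt_of_lt_of_le one_pos hx1
    have hax : (0:ℝ) < a + x := by linarith
    have hR : (0:ℝ) < (x ^ 2 + t ^ 2) / ((a + x) ^ 2) := by positivity
    have hup : Real.log ((x ^ 2 + t ^ 2) / ((a + x) ^ 2)) ≤ Real.log (1 + t ^ 2) := by
      apply Real.log_le_log hR
      rw [div_le_iff₀ (by positivity)]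
      have e1 : x ^ 2 ≤ (a + x) ^ 2 := by nlinarith
      have e2 : (1:ℝ) ≤ (a + x) ^ 2 := by nlinarith
      nlinarith [mul_le_mul_of_nonneg_left e2 (sq_nonneg t)]
    have hlow : -(2 * Real.log (1 + a)) ≤ Real.log ((x ^ 2 + t ^ 2) / ((a + x) ^ 2)) := by
      have h1a : (0:ℝ) < 1 + a := by linarith
      have key : ((1 + a) ^ 2)⁻¹ ≤ (x ^ 2 + t ^ 2) / ((a + x) ^ 2) := by
        rw [le_div_iff₀ (by positivity), inv_mul_le_iff₀ (by positivity)]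
        have e3 : a + x ≤ (1 + a) * x := by nlinarith
        have e4 : (a + x) ^ 2 ≤ ((1 + a) * x) ^ 2 := pow_le_pow_left₀ hax.le e3 2
        nlinarith [e4, mul_nonneg (sq_nonneg (1 + a)) (sq_nonneg t)]
      have := Real.log_le_log (by positivity) key
      rw [Real.log_inv, Real.log_pow] at this
      push_cast at this
      linarith
    have habs : |Real.log ((x ^ 2 + t ^ 2) / ((a + x) ^ 2))|
        ≤ Real.log (1 + t ^ 2) + 2 * Real.log (1 + a) := by
      have hl1 : (0:ℝ) ≤ Real.log (1 + t ^ 2) := Real.log_nonneg (by nlinarith)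
      have hl2 : (0:ℝ) ≤ Real.log (1 + a) := Real.log_nonneg (by linarith)
      rw [abs_le]; constructor <;> linarith
    have hker : (0:ℝ) < (a ^ 2 + t ^ 2)⁻¹ := by positivity
    rw [Real.norm_eq_abs, div_eq_mul_inv, abs_mul, abs_mul, abs_of_pos ha, abs_of_pos hker]
    calc a * |Real.log ((x ^ 2 + t ^ 2) / ((a + x) ^ 2))| * (a ^ 2 + t ^ 2)⁻¹
        ≤ a * (Real.log (1 + t ^ 2) + 2 * Real.log (1 + a)) * (a ^ 2 + t ^ 2)⁻¹ := by
          apply mul_le_mul_of_nonneg_right (mul_le_mul_of_nonneg_left habs ha.le) hker.le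
      _ = a * (Real.log (1 + t ^ 2) + 2 * Real.log (1 + a)) * (a ^ 2 + t ^ 2)⁻¹ := rfl
  · have h1 : Integrable fun t : ℝ => a * (Real.log (1 + t ^ 2) * (a ^ 2 + t ^ 2)⁻¹) :=
      (integrable_log_one_add_kernel ha).const_mul a
    have h2 : Integrable fun t : ℝ => (a * (2 * Real.log (1 + a))) * (a ^ 2 + t ^ 2)⁻¹ :=
      (integrable_inv_kernel ha).const_mul _
    exact (h1.add h2).congr (by filter_upwards with t; simp only [Pi.add_apply]; ring)
  · filter_upwards with t
    have ht2 : (0:ℝ) < a ^ 2 + t ^ 2 := by positivity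
    have hx2 : Tendsto (fun x : ℝ => t ^ 2 / x ^ 2) atTop (nhds 0) :=
      Tendsto.div_atTop tendsto_const_nhds (tendsto_pow_atTop two_ne_zero)
    have hx3 : Tendsto (fun x : ℝ => a / x) atTop (nhds 0) :=
      Tendsto.div_atTop tendsto_const_nhds tendsto_id
    have hR : Tendsto (fun x : ℝ => (x ^ 2 + t ^ 2) / ((a + x) ^ 2)) atTop (nhds 1) := by
      have hnum : Tendsto (fun x : ℝ => 1 + t ^ 2 / x ^ 2) atTop (nhds 1) := by
        have := tendsto_const_nhds (x := (1:ℝ)) (f := atTop (α := ℝ)) |>.add hx2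
        simpa using this
      have hden : Tendsto (fun x : ℝ => (1 + a / x) ^ 2) atTop (nhds 1) := by
        have := (tendsto_const_nhds (x := (1:ℝ)) (f := atTop (α := ℝ)) |>.add hx3).pow 2
        simpa using this
      have hdiv := hnum.div hden one_ne_zero
      rw [div_one] at hdiv
      apply hdiv.congr'
      filter_upwards [eventually_gt_atTop (0:ℝ)] with x hx
      have hax : (0:ℝ) < a + x := by linarith
      simp only [Pi.div_apply]
      rw [div_eq_div_iff (by positivity) (by positivity)]
      field_simp
      ring_nf
    have hlog : Tendsto (fun x : ℝ => Real.log ((x ^ 2 + t ^ 2) / ((a + x) ^ 2)))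
        atTop (nhds 0) := by
      have := (Real.continuousAt_log one_ne_zero).tendsto.comp hR
      simpa [Function.comp_def] using this
    have := hlog.mul_const (a * (a ^ 2 + t ^ 2)⁻¹)
    rw [zero_mul] at this
    apply this.congr
    intro x
    ring



lemma F_eval {a x : ℝ} (ha : 0 < a) (hx : 0 < x) :
    ∫ t : ℝ, a * Real.log (x ^ 2 + t ^ 2) / (a ^ 2 + t ^ 2) = 2 * π * Real.log (a + x) := by
  set G : ℝ → ℝ := fun z => (∫ t : ℝ, a * Real.log (z ^ 2 + t ^ 2) / (a ^ 2 + t ^ 2))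
    - 2 * π * Real.log (a + z) with hG
  have hconst : ∀ᶠ z in atTop, G z = G x := by
    filter_upwards [eventually_ge_atTop x] with z hz
    have := F_diff ha hx hz
    rw [hG]
    dsimp only
    linarith
  have h1 : Tendsto G atTop (nhds (G x)) :=
    tendsto_const_nhds.congr' (hconst.mono fun z h => h.symm)
  have h2 := tendsto_nhds_unique h1 (F_tendsto ha)
  have : G x = 0 := h2
  rw [hG] at this
  dsimp only at this
  linarith

lemma F_zero {a : ℝ} (ha : 0 < a) :
    ∫ t : ℝ, a * Real.log (t ^ 2) / (a ^ 2 + t ^ 2) = 2 * π * Real.log a := by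
  have hne : ∀ᵐ t : ℝ, t ≠ (0:ℝ) := by
    refine ae_iff.mpr ?_
    have : {t : ℝ | ¬t ≠ 0} = {0} := by ext v; simp
    rw [this]
    exact measure_singleton 0
  have h1 : Tendsto (fun y : ℝ => ∫ t : ℝ, a * Real.log (y ^ 2 + t ^ 2) / (a ^ 2 + t ^ 2))
      (nhdsWithin 0 (Ioi 0)) (nhds (∫ t : ℝ, a * Real.log (t ^ 2) / (a ^ 2 + t ^ 2))) := by
    apply tendsto_integral_filter_of_dominated_convergence
      (fun t => a * (|Real.log (t ^ 2)| + Real.log (1 + t ^ 2)) * (a ^ 2 + t ^ 2)⁻¹)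
    · filter_upwards with y
      exact ((measurable_const.mul (Real.measurable_log.comp (by fun_prop))).div
        (by fun_prop)).aestronglyMeasurable
    · filter_upwards [Ioc_mem_nhdsGT_of_mem (by norm_num : (0:ℝ) ∈ Ico 0 1)] with y hy
      filter_upwards [hne] with t ht
      have hy0 : 0 < y := hy.1
      have hy1 : y ≤ 1 := hy.2
      have ht2 : (0:ℝ) < t ^ 2 := by positivity
      have hup : Real.log (y ^ 2 + t ^ 2) ≤ Real.log (1 + t ^ 2) :=
        Real.log_le_log (by positivity) (by nlinarith)
      have hlow : Real.log (t ^ 2) ≤ Real.log (y ^ 2 + t ^ 2) :=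
        Real.log_le_log ht2 (by nlinarith)
      have habs : |Real.log (y ^ 2 + t ^ 2)| ≤ |Real.log (t ^ 2)| + Real.log (1 + t ^ 2) := by
        have g1 : (0:ℝ) ≤ Real.log (1 + t ^ 2) := Real.log_nonneg (by nlinarith)
        have g2 := abs_nonneg (Real.log (t ^ 2))
        have g3 := neg_abs_le (Real.log (t ^ 2))
        rw [abs_le]; constructor <;> linarith
      have hker : (0:ℝ) < (a ^ 2 + t ^ 2)⁻¹ := by positivity
      rw [Real.norm_eq_abs, div_eq_mul_inv, abs_mul, abs_mul, abs_of_pos ha, abs_of_pos hker]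
      exact mul_le_mul_of_nonneg_right (mul_le_mul_of_nonneg_left habs ha.le) hker.le
    · have hs1 : Integrable fun t : ℝ => a * (|Real.log (t ^ 2)| * (a ^ 2 + t ^ 2)⁻¹) :=
        (integrable_abs_log_sq_kernel ha).const_mul a
      have hs2 : Integrable fun t : ℝ => a * (Real.log (1 + t ^ 2) * (a ^ 2 + t ^ 2)⁻¹) :=
        (integrable_log_one_add_kernel ha).const_mul a
      exact (hs1.add hs2).congr (by filter_upwards with t; simp only [Pi.add_apply]; ring)
    · filter_upwards [hne] with t ht
      have ht2 : t ^ 2 ≠ 0 := by positivity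
      have hc : ContinuousAt (fun y : ℝ => a * Real.log (y ^ 2 + t ^ 2) / (a ^ 2 + t ^ 2)) 0 := by
        apply ContinuousAt.div_const
        apply ContinuousAt.mul continuousAt_const
        apply ContinuousAt.comp (Real.continuousAt_log (by simpa using ht2))
        fun_prop
      have := hc.tendsto
      simp only [zero_pow, ne_eq, OfNat.ofNat_ne_zero, not_false_eq_true, zero_add] at this
      exact this.mono_left nhdsWithin_le_nhds
  have h2 : Tendsto (fun y : ℝ => ∫ t : ℝ, a * Real.log (y ^ 2 + t ^ 2) / (a ^ 2 + t ^ 2))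
      (nhdsWithin 0 (Ioi 0)) (nhds (2 * π * Real.log a)) := by
    have h3 : Tendsto (fun y : ℝ => 2 * π * Real.log (a + y))
        (nhdsWithin 0 (Ioi 0)) (nhds (2 * π * Real.log a)) := by
      have hc : ContinuousAt (fun y : ℝ => 2 * π * Real.log (a + y)) 0 := by
        apply ContinuousAt.mul continuousAt_const
        apply ContinuousAt.comp (Real.continuousAt_log (by simpa using ha.ne'))
        fun_prop
      have := hc.tendsto
      simp only [add_zero] at this
      exact this.mono_left nhdsWithin_le_nhds
    apply h3.congr'
    filter_upwards [self_mem_nhdsWithin] with y hy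
    exact (F_eval ha hy).symm
  exact tendsto_nhds_unique h1 h2

theorem poisson_log_quadratic (a b : ℝ) (ha : 0 < a) :
    (1 / π) * ∫ t : ℝ, a * Real.log (b ^ 2 + t ^ 2) / (a ^ 2 + t ^ 2)
      = 2 * Real.log (|b| + a) := by
  rcases eq_or_ne b 0 with rfl | hb
  · simp only [abs_zero, zero_add]
    have h0 : ∀ t : ℝ, a * Real.log ((0:ℝ) ^ 2 + t ^ 2) / (a ^ 2 + t ^ 2)
        = a * Real.log (t ^ 2) / (a ^ 2 + t ^ 2) := by
      intro t; norm_num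
    rw [show (∫ t : ℝ, a * Real.log ((0:ℝ) ^ 2 + t ^ 2) / (a ^ 2 + t ^ 2))
        = ∫ t : ℝ, a * Real.log (t ^ 2) / (a ^ 2 + t ^ 2) from integral_congr_ae
        (Eventually.of_forall h0), F_zero ha]
    field_simp
  · have habs : b ^ 2 = |b| ^ 2 := (sq_abs b).symm
    have hb' : 0 < |b| := abs_pos.mpr hb
    rw [show (∫ t : ℝ, a * Real.log (b ^ 2 + t ^ 2) / (a ^ 2 + t ^ 2))
        = ∫ t : ℝ, a * Real.log (|b| ^ 2 + t ^ 2) / (a ^ 2 + t ^ 2) by rw [← habs],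
      F_eval ha hb']
    rw [add_comm a |b|]
    field_simp
end
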